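/- Let L be an irreducible almost lower triangular transition matrix on ℕ and, for each n, let ρ^{(n)} be an invariant probability distribution of the projection L^{(n)} of L onto {0,…,n}, extended by 0 to all of ℕ. If there exists ρ : ℕ → ℝ with ρ a ≥ 0 for all a and ∑_a ρ a = 1, such that ρ^{(n)} a → ρ a as n → ∞ for every a, then ρ is invariant for L: for every b the series ∑_a ρ a · L a b converges with sum ρ b. -/

import Mathlib

/-- Irreducibility of a matrix on `ℕ`. -/
def MatIrreducible (M : ℕ → ℕ → ℝ) : Prop :=
  ∀ i j : ℕ, ∃ (n : ℕ) (x : ℕ → ℕ), 0 < n ∧ x 0 = i ∧ x n = j ∧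
    ∀ k, k < n → 0 < M (x k) (x (k + 1))

/-- The projection `M^{(n)}` of `M` onto `{0,…,n}`. -/
noncomputable def projTM (M : ℕ → ℕ → ℝ) (n : ℕ) : ℕ → ℕ → ℝ :=
  fun i j =>
    if j < n then M i j
    else if j = n then (∑' k : ℕ, if n ≤ k then M i k else 0)
    else 0

/-- Proposition 3.8: if the invariant probability distributions `ρ^{(n)}` of the
projections `L^{(n)}` (extended by `0`) converge weakly to a probability measure `ρ`
on `ℕ`, then `ρ` is invariant for the irreducible almost lower triangular transition
matrix `L`. -/
theorem weak_limit_of_projection_invariants_is_invariant (L : ℕ → ℕ → ℝ)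
    (hnn : ∀ i j, 0 ≤ L i j)
    (hrow : ∀ i, HasSum (fun j => L i j) 1)
    (hlt : ∀ i j, i + 1 < j → L i j = 0)
    (hirr : MatIrreducible L)
    (ρ : ℕ → ℕ → ℝ)
    (hρnn : ∀ n a, 0 ≤ ρ n a)
    (hρzero : ∀ n a, n < a → ρ n a = 0)
    (hρsum : ∀ n, ∑ a ∈ Finset.range (n + 1), ρ n a = 1)
    (hρinv : ∀ n, ∀ b ≤ n, ∑ a ∈ Finset.range (n + 1), ρ n a * projTM L n a b = ρ n b)
    (ρlim : ℕ → ℝ) (hρlimnn : ∀ a, 0 ≤ ρlim a) (hρlim1 : HasSum ρlim 1)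
    (hconv : ∀ a, Filter.Tendsto (fun n => ρ n a) Filter.atTop (nhds (ρlim a))) :
    ∀ b, HasSum (fun a => ρlim a * L a b) (ρlim b) := by
  intro b
  have hL1 : ∀ a, L a b ≤ 1 := fun a => le_hasSum (hrow a) b (fun j _ => hnn a j)
  have hsummable : Summable (fun a => ρlim a * L a b) := by
    apply Summable.of_nonneg_of_le (fun a => mul_nonneg (hρlimnn a) (hnn a b))
      (fun a => ?_) hρlim1.summable
    calc ρlim a * L a b ≤ ρlim a * 1 := by
          exact mul_le_mul_of_nonneg_left (hL1 a) (hρlimnn a)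
      _ = ρlim a := mul_one _
  have hS : HasSum (fun a => ρlim a * L a b) (∑' a, ρlim a * L a b) := hsummable.hasSum
  suffices hSb : (∑' a, ρlim a * L a b) = ρlim b by rwa [hSb] at hS
  -- the ℓ¹ distance between ρ n and ρlim on range (n+1) tends to 0 (Scheffé)
  have hd : Filter.Tendsto (fun n => ∑ a ∈ Finset.range (n+1), |ρ n a - ρlim a|)
      Filter.atTop (nhds 0) := by
    rw [Metric.tendsto_atTop]
    intro ε hε
    obtain ⟨m, hm⟩ := (Metric.tendsto_atTop.1 hρlim1.tendsto_sum_nat) (ε/4) (by linarith)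
    have hm' : 1 - ε/4 < ∑ a ∈ Finset.range m, ρlim a := by
      have := hm m le_rfl
      rw [Real.dist_eq, abs_lt] at this
      linarith [this.1]
    have h1 : Filter.Tendsto (fun n => ∑ a ∈ Finset.range m, |ρ n a - ρlim a|)
        Filter.atTop (nhds 0) := by
      have : Filter.Tendsto (fun n => ∑ a ∈ Finset.range m, |ρ n a - ρlim a|)
          Filter.atTop (nhds (∑ a ∈ Finset.range m, |ρlim a - ρlim a|)) := by
        apply tendsto_finset_sum
        intro a _
        exact ((hconv a).sub tendsto_const_nhds).abs
      simpa using this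
    obtain ⟨N, hN⟩ := (Metric.tendsto_atTop.1 h1) (ε/4) (by linarith)
    refine ⟨max m N, fun n hn => ?_⟩
    have hnm : m ≤ n := le_trans (le_max_left _ _) hn
    have hnN : N ≤ n := le_trans (le_max_right _ _) hn
    have hhead : ∑ a ∈ Finset.range m, |ρ n a - ρlim a| < ε/4 := by
      have := hN n hnN
      rw [Real.dist_eq] at this
      calc ∑ a ∈ Finset.range m, |ρ n a - ρlim a|
          ≤ |∑ a ∈ Finset.range m, |ρ n a - ρlim a| - 0| := by
            rw [sub_zero]; exact le_abs_self _
        _ < ε/4 := this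
    have hsub : Finset.range m ⊆ Finset.range (n+1) := by
      apply Finset.range_subset_range.2; omega
    have hρnhead : 1 - ε/2 < ∑ a ∈ Finset.range m, ρ n a := by
      have h2 : |∑ a ∈ Finset.range m, ρ n a - ∑ a ∈ Finset.range m, ρlim a|
          ≤ ∑ a ∈ Finset.range m, |ρ n a - ρlim a| := by
        rw [← Finset.sum_sub_distrib]
        exact Finset.abs_sum_le_sum_abs _ _
      rw [abs_le] at h2
      linarith [h2.1]
    have hρlimle : ∑ a ∈ Finset.range (n+1), ρlim a ≤ 1 :=
      sum_le_hasSum _ (fun a _ => hρlimnn a) hρlim1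
    have hsplit : ∑ a ∈ Finset.range (n+1), |ρ n a - ρlim a|
        = ∑ a ∈ Finset.range m, |ρ n a - ρlim a|
          + ∑ a ∈ (Finset.range (n+1)) \ (Finset.range m), |ρ n a - ρlim a| :=
      by rw [← Finset.sum_sdiff hsub]; ring
    have htail : ∑ a ∈ (Finset.range (n+1)) \ (Finset.range m), |ρ n a - ρlim a|
        ≤ (∑ a ∈ Finset.range (n+1), ρ n a - ∑ a ∈ Finset.range m, ρ n a)
          + (∑ a ∈ Finset.range (n+1), ρlim a - ∑ a ∈ Finset.range m, ρlim a) := by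
      have h3 : ∀ a ∈ (Finset.range (n+1)) \ (Finset.range m),
          |ρ n a - ρlim a| ≤ ρ n a + ρlim a := by
        intro a _
        have := abs_sub (ρ n a) (ρlim a)
        calc |ρ n a - ρlim a| ≤ |ρ n a| + |ρlim a| := abs_sub _ _
          _ = ρ n a + ρlim a := by
              rw [abs_of_nonneg (hρnn n a), abs_of_nonneg (hρlimnn a)]
      calc ∑ a ∈ (Finset.range (n+1)) \ (Finset.range m), |ρ n a - ρlim a|
          ≤ ∑ a ∈ (Finset.range (n+1)) \ (Finset.range m), (ρ n a + ρlim a) :=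
            Finset.sum_le_sum h3
        _ = _ := by
            rw [Finset.sum_add_distrib]
            congr 1 <;> rw [eq_sub_iff_add_eq, Finset.sum_sdiff hsub]
    rw [Real.dist_eq, sub_zero, abs_of_nonneg (Finset.sum_nonneg (fun a _ => abs_nonneg _))]
    rw [hsplit]
    rw [hρsum n] at htail
    linarith
  -- partial sums of the limit series
  have hf : Filter.Tendsto (fun n => ∑ a ∈ Finset.range (n+1), ρlim a * L a b)
      Filter.atTop (nhds (∑' a, ρlim a * L a b)) :=
    (hS.tendsto_sum_nat).comp (Filter.tendsto_add_atTop_nat 1)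
  -- the invariance identity for large n
  have hg : ∀ᶠ n in Filter.atTop,
      ∑ a ∈ Finset.range (n+1), ρ n a * L a b = ρ n b := by
    filter_upwards [Filter.eventually_ge_atTop (b+1)] with n hn
    have hb : b < n := hn
    have := hρinv n b (le_of_lt hb)
    rw [← this]
    apply Finset.sum_congr rfl
    intro a _
    congr 1
    simp [projTM, hb]
  have hgt : Filter.Tendsto (fun n => ∑ a ∈ Finset.range (n+1), ρ n a * L a b)
      Filter.atTop (nhds (ρlim b)) :=
    (Filter.Tendsto.congr' (Filter.EventuallyEq.symm hg) (hconv b))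
  -- the difference tends to 0
  have hdiff : Filter.Tendsto (fun n => ∑ a ∈ Finset.range (n+1), ρ n a * L a b
      - ∑ a ∈ Finset.range (n+1), ρlim a * L a b) Filter.atTop (nhds 0) := by
    apply squeeze_zero_norm (fun n => ?_) hd
    rw [← Finset.sum_sub_distrib]
    calc ‖∑ a ∈ Finset.range (n+1), (ρ n a * L a b - ρlim a * L a b)‖
        ≤ ∑ a ∈ Finset.range (n+1), |ρ n a * L a b - ρlim a * L a b| :=
          Finset.abs_sum_le_sum_abs _ _
      _ ≤ ∑ a ∈ Finset.range (n+1), |ρ n a - ρlim a| := by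
          apply Finset.sum_le_sum
          intro a _
          rw [← sub_mul, abs_mul]
          calc |ρ n a - ρlim a| * |L a b| ≤ |ρ n a - ρlim a| * 1 := by
                apply mul_le_mul_of_nonneg_left _ (abs_nonneg _)
                rw [abs_of_nonneg (hnn a b)]; exact hL1 a
            _ = _ := mul_one _
  have hfinal : Filter.Tendsto (fun n => ∑ a ∈ Finset.range (n+1), ρlim a * L a b)
      Filter.atTop (nhds (ρlim b)) := by
    have := hgt.sub hdiff
    simpa using this
  exact tendsto_nhds_unique hf hfinal
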